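/- Let F ∈ ℂ, k ∈ ℤ∖{0}, a ∈ ℂ∖{0}, m ∈ ℂ, and let b ∈ ℂ satisfy kb = 1. On V define linear operators 𝕃_n, 𝕀_n by 𝕃_n(v_t) = t·v_{n+t} for t ≠ −n, 𝕃_n(v_{−n}) = 0, 𝕀_n(v_t) = 0 for t ≠ −n, 𝕀_n(v_{−n}) = nF·v_0, and define the linear map φ by φ(v_t) = aᵗ·m·v_{kt}. Then for all n ∈ ℤ: φ ∘ 𝕃_n = (1/k)aⁿ·𝕃_{kn} ∘ φ and φ ∘ 𝕀_n = aⁿb·𝕀_{kn} ∘ φ; consequently (φ∘𝕃_n)(v_t) = t·a^{n+t}·m·v_{k(n+t)} for t ≠ −n, (φ∘𝕃_n)(v_{−n}) = 0, (φ∘𝕀_n)(v_t) = 0 for t ≠ −n, and (φ∘𝕀_n)(v_{−n}) = nF·m·v_0. -/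

import Mathlib

/-- The ℂ-vector space with basis `{v t : t ∈ ℤ}` (finitely supported functions ℤ → ℂ). -/
abbrev V : Type := ℤ →₀ ℂ

/-- The basis vector `v t`. -/
noncomputable def v (t : ℤ) : V := Finsupp.single t 1

/-- The linear operator on `V` determined by its values on the basis vectors. -/
noncomputable def op (f : ℤ → V) : V →ₗ[ℂ] V := Finsupp.lift V ℂ ℤ f

/-- The operator `𝕃 n` of the module `Ũ_F`:
`𝕃 n (v t) = t v (n+t)` for `t ≠ -n`, `𝕃 n (v (-n)) = 0`. -/
noncomputable def Lop (n : ℤ) : V →ₗ[ℂ] V :=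
  op fun t => if t = -n then 0 else (t : ℂ) • v (n + t)

/-- The operator `𝕀 n` of the module `Ũ_F`:
`𝕀 n (v t) = 0` for `t ≠ -n`, `𝕀 n (v (-n)) = nF • v 0`. -/
noncomputable def Iop (F : ℂ) (n : ℤ) : V →ₗ[ℂ] V :=
  op fun t => if t = -n then ((n : ℂ) * F) • v 0 else 0

/-- The twisting linear map `φ (v t) = aᵗ m • v (kt)`. -/
noncomputable def φmap (a m : ℂ) (k : ℤ) : V →ₗ[ℂ] V :=
  op fun t => (a ^ t * m) • v (k * t)

lemma op_v (f : ℤ → V) (t : ℤ) : op f (v t) = f t := by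
  rw [op, v, Finsupp.lift_apply, Finsupp.sum_single_index (by simp), one_smul]

lemma op_ext {g h : V →ₗ[ℂ] V} (H : ∀ t, g (v t) = h (v t)) : g = h := by
  ext t
  simpa [v] using DFunLike.congr_fun (H t) _

theorem tildeU_F_intertwine (F : ℂ) (k : ℤ) (hk : k ≠ 0) (a : ℂ) (ha : a ≠ 0)
    (m b : ℂ) (hb : (k : ℂ) * b = 1) :
    (∀ n : ℤ, φmap a m k ∘ₗ Lop n
        = ((1 / (k : ℂ) * a ^ n) • Lop (k * n)) ∘ₗ φmap a m k) ∧
    (∀ n : ℤ, φmap a m k ∘ₗ Iop F n = ((a ^ n * b) • Iop F (k * n)) ∘ₗ φmap a m k) ∧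
    (∀ n t : ℤ, t ≠ -n → φmap a m k (Lop n (v t))
        = ((t : ℂ) * a ^ (n + t) * m) • v (k * (n + t))) ∧
    (∀ n : ℤ, φmap a m k (Lop n (v (-n))) = 0) ∧
    (∀ n t : ℤ, t ≠ -n → φmap a m k (Iop F n (v t)) = 0) ∧
    (∀ n : ℤ, φmap a m k (Iop F n (v (-n))) = ((n : ℂ) * F * m) • v 0) := by
  have hk' : (k : ℂ) ≠ 0 := Int.cast_ne_zero.mpr hk
  have hiff : ∀ n t : ℤ, (k * t = -(k * n)) ↔ (t = -n) := by
    intro n t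
    constructor
    · intro h; exact mul_left_cancel₀ hk (by linarith)
    · rintro rfl; ring
  refine ⟨?_, ?_, ?_, ?_, ?_, ?_⟩
  · intro n
    apply op_ext
    intro t
    simp only [LinearMap.comp_apply, LinearMap.smul_apply, Lop, φmap, op_v]
    by_cases h : t = -n
    · subst h
      simp [op_v, hiff]
    · rw [if_neg h, map_smul, op_v, map_smul, op_v, if_neg (fun hc => h ((hiff n t).mp hc))]
      rw [smul_smul, smul_smul, smul_smul, mul_add k n t, zpow_add₀ ha]
      congr 1
      push_cast
      field_simp
  · intro n
    apply op_ext
    intro t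
    simp only [LinearMap.comp_apply, LinearMap.smul_apply, Iop, φmap, op_v]
    by_cases h : t = -n
    · subst h
      rw [if_pos rfl, map_smul, op_v, map_smul, op_v, if_pos (by ring)]
      rw [smul_smul, smul_smul, smul_smul, mul_zero]
      congr 1
      rw [zpow_zero]
      push_cast
      have hX : a ^ n * a ^ (-n : ℤ) = 1 := by
        rw [← zpow_add₀ ha]; simp
      linear_combination (-(n:ℂ) * F * m) * hb + (-(b * m * (k:ℂ) * (n:ℂ) * F)) * hX
    · rw [if_neg h, map_zero, map_smul, op_v, if_neg (fun hc => h ((hiff n t).mp hc))]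
      simp
  · intro n t h
    rw [Lop, op_v, if_neg h, map_smul, φmap, op_v, smul_smul, zpow_add₀ ha]
    ring_nf
  · intro n
    rw [Lop, op_v, if_pos rfl, map_zero]
  · intro n t h
    rw [Iop, op_v, if_neg h, map_zero]
  · intro n
    rw [Iop, op_v, if_pos rfl, map_smul, φmap, op_v, smul_smul]
    simp
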